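/- Fix a ∈ V and integer n ≥ 1, and let f_a(z) = z + (1/n)Ω(a, z)^{n+1}·a. Then f_a pulls back the Liouville form θᵃ to the canonical one: (1/2)Ω(f_a(z), Df_a)_z(v)) = (1/2)Ω(z, v) for all z, v ∈ V, where θᵃ_z(v) = (1/2)Ω(z + Ω(a,z)^{n+1}·a, v). In particular f_a is a symplectomorphism of (V, ω). -/

import Mathlib

lemma stmt17_fderiv {V : Type*} [NormedAddCommGroup V] [NormedSpace ℝ V]
    (Ω : V →L[ℝ] V →L[ℝ] ℝ) (a : V) (n : ℕ) (z v : V) :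
    fderiv ℝ (fun w : V => w + (((1 : ℝ)/n) * (Ω a w) ^ (n + 1)) • a) z v
      = v + (((1 : ℝ)/n) * ((n + 1 : ℕ) * (Ω a z) ^ n) * Ω a v) • a := by
  have hL : HasFDerivAt (fun w : V => Ω a w) (Ω a) z := (Ω a).hasFDerivAt
  have hpow : HasFDerivAt (fun w : V => (Ω a w) ^ (n + 1))
      (((n + 1 : ℕ) * (Ω a z) ^ n) • (Ω a)) z := by
    have := (hasDerivAt_pow (n + 1) (Ω a z)).comp_hasFDerivAt z hL
    simpa [Function.comp_def] using this
  have hmul : HasFDerivAt (fun w : V => ((1 : ℝ)/n) * (Ω a w) ^ (n + 1))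
      (((1 : ℝ)/n) • (((n + 1 : ℕ) * (Ω a z) ^ n) • (Ω a))) z := hpow.const_mul _
  have h : HasFDerivAt (fun w : V => w + (((1 : ℝ)/n) * (Ω a w) ^ (n + 1)) • a)
      (ContinuousLinearMap.id ℝ V
        + (((1 : ℝ)/n) • (((n + 1 : ℕ) * (Ω a z) ^ n) • (Ω a))).smulRight a) z :=
    (hasFDerivAt_id z).add (hmul.smul_const a)
  rw [h.fderiv]
  simp [ContinuousLinearMap.smulRight_apply, smul_smul, mul_assoc]

theorem stmt17 {V : Type*} [NormedAddCommGroup V] [NormedSpace ℝ V]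
    [FiniteDimensional ℝ V]
    (Ω : V →L[ℝ] V →L[ℝ] ℝ)
    (halt : ∀ x, Ω x x = 0)
    (hnd : ∀ x, (∀ y, Ω x y = 0) → x = 0)
    (a : V) (n : ℕ) (hn : 1 ≤ n) :
    (∀ z v : V,
      ((1 : ℝ)/2) * Ω
          ((fun w : V => w + (((1 : ℝ)/n) * (Ω a w) ^ (n + 1)) • a) z
            + (Ω a ((fun w : V => w + (((1 : ℝ)/n) * (Ω a w) ^ (n + 1)) • a) z)) ^ (n + 1) • a)
          (fderiv ℝ (fun w : V => w + (((1 : ℝ)/n) * (Ω a w) ^ (n + 1)) • a) z v)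
        = ((1 : ℝ)/2) * Ω z v) ∧
    (∀ z x y : V,
      Ω (fderiv ℝ (fun w : V => w + (((1 : ℝ)/n) * (Ω a w) ^ (n + 1)) • a) z x)
        (fderiv ℝ (fun w : V => w + (((1 : ℝ)/n) * (Ω a w) ^ (n + 1)) • a) z y)
        = Ω x y) := by
  have hanti : ∀ x y : V, Ω x y = - Ω y x := by
    intro x y
    have h := halt (x + y)
    simp [map_add, ContinuousLinearMap.add_apply, halt] at h
    linarith
  have hn0 : (n : ℝ) ≠ 0 := by positivity
  constructor
  · intro z v
    rw [stmt17_fderiv]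
    simp only [map_add, map_smul, ContinuousLinearMap.add_apply,
      ContinuousLinearMap.smul_apply, halt, smul_eq_mul, mul_zero, add_zero]
    have hza : Ω z a = - Ω a z := hanti z a
    field_simp
    rw [hza]; push_cast; ring
  · intro z x y
    rw [stmt17_fderiv, stmt17_fderiv]
    simp only [map_add, map_smul, ContinuousLinearMap.add_apply,
      ContinuousLinearMap.smul_apply, halt, smul_eq_mul, mul_zero, add_zero]
    have hxa : Ω x a = - Ω a x := hanti x a
    rw [hxa]
    ring
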